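/- Let S be a self-adjoint operator on a complex Hilbert space 𝔥 and ξ ∈ 𝔥. Then there exists a complex conjugation C on 𝔥 (an anti-unitary involution) such that Cξ = ξ and CS = SC. -/

import Mathlib

open Complex

theorem stmt18_aux_max {𝔥 : Type*} [NormedAddCommGroup 𝔥] [InnerProductSpace ℂ 𝔥]
    (S : 𝔥 →L[ℂ] 𝔥) (hsymm : ∀ x y : 𝔥, (inner ℂ (S x) y : ℂ) = inner ℂ x (S y)) (ξ : 𝔥) :
    ∃ V₀ : Submodule ℝ 𝔥,
      (∀ v ∈ V₀, ∀ w ∈ V₀, (inner ℂ v w : ℂ).im = 0) ∧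
      (∀ v ∈ V₀, S v ∈ V₀) ∧ ξ ∈ V₀ ∧ IsClosed (V₀ : Set 𝔥) ∧
      (∀ x : 𝔥, (∀ v ∈ V₀, (inner ℂ v x : ℂ) = 0) → x = 0) := by
  classical
  set 𝒮 : Set (Submodule ℝ 𝔥) :=
    {V | (∀ v ∈ V, ∀ w ∈ V, (inner ℂ v w : ℂ).im = 0) ∧ (∀ v ∈ V, S v ∈ V)} with h𝒮
  have hRsmul : ∀ (a : ℝ) (y : 𝔥), a • y = (a : ℂ) • y := fun a y => by
    rw [show ((a:ℂ)) = algebraMap ℝ ℂ a from rfl, algebraMap_smul]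
  -- moving powers of S across the inner ℂ product
  have hmove : ∀ (m : ℕ) (y z : 𝔥), (inner ℂ ((S ^ m) y) z : ℂ) = inner ℂ y ((S ^ m) z) := by
    intro m
    induction m with
    | zero => simp
    | succ n ih =>
      intro y z
      have h1 : (S ^ (n + 1)) y = (S ^ n) (S y) := by
        rw [pow_succ]; rfl
      have h2 : (S ^ (n + 1)) z = S ((S ^ n) z) := by
        rw [pow_succ']; rfl
      rw [h1, h2, ih, hsymm]
  -- enlarging a good subspace by a complexly-orthogonal vector
  have span_good : ∀ V ∈ 𝒮, ∀ x : 𝔥, (∀ v ∈ V, (inner ℂ v x : ℂ) = 0) →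
      (V ⊔ Submodule.span ℝ (Set.range fun n : ℕ => (S ^ n) x)) ∈ 𝒮 := by
    intro V hV x hx
    obtain ⟨hVreal, hVS⟩ := hV
    set sp := Submodule.span ℝ (Set.range fun n : ℕ => (S ^ n) x) with hsp
    have horthn : ∀ n : ℕ, ∀ v ∈ V, (inner ℂ v ((S ^ n) x) : ℂ) = 0 := by
      intro n
      induction n with
      | zero => simpa using hx
      | succ k ih =>
        intro v hv
        have h2 : (S ^ (k + 1)) x = S ((S ^ k) x) := by rw [pow_succ']; rfl
        rw [h2, ← hsymm]
        exact ih (S v) (hVS v hv)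
    have horth : ∀ v ∈ V, ∀ p ∈ sp, (inner ℂ v p : ℂ) = 0 := by
      intro v hv p hp
      induction hp using Submodule.span_induction with
      | mem y hy => obtain ⟨n, rfl⟩ := hy; exact horthn n v hv
      | zero => simp
      | add y z _ _ hy hz => rw [inner_add_right, hy, hz, add_zero]
      | smul a y _ hy =>
        rw [hRsmul a y, inner_smul_right, hy, mul_zero]
    have hrealgen : ∀ m n : ℕ, (inner ℂ ((S ^ m) x) ((S ^ n) x) : ℂ).im = 0 := by
      intro m n
      have h1 : (inner ℂ ((S ^ m) x) ((S ^ n) x) : ℂ) = inner ℂ x ((S ^ (m + n)) x) := by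
        rw [hmove, ← ContinuousLinearMap.comp_apply, ← ContinuousLinearMap.mul_def, ← pow_add]
      have h2 : (starRingEnd ℂ) (inner ℂ x ((S ^ (m + n)) x) : ℂ) = inner ℂ x ((S ^ (m + n)) x) := by
        rw [inner_conj_symm, hmove]
      rw [h1]
      exact (Complex.conj_eq_iff_im.mp h2)
    have hrealsp : ∀ p ∈ sp, ∀ q ∈ sp, (inner ℂ p q : ℂ).im = 0 := by
      intro p hp
      induction hp using Submodule.span_induction with
      | mem y hy =>
        obtain ⟨m, rfl⟩ := hy
        intro q hq
        induction hq using Submodule.span_induction with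
        | mem z hz => obtain ⟨n, rfl⟩ := hz; exact hrealgen m n
        | zero => simp
        | add u w _ _ hu hw =>
          rw [inner_add_right]; beta_reduce at hu hw; simp only [Complex.add_im, hu, hw, add_zero]
        | smul a u _ hu =>
          rw [hRsmul a u, inner_smul_right]
          beta_reduce at hu
          simp only [Complex.mul_im, hu, Complex.ofReal_im, mul_zero, zero_mul, add_zero]
      | zero => intro q hq; simp
      | add u w _ _ hu hw =>
        intro q hq
        rw [inner_add_left]
        simp [Complex.add_im, hu q hq, hw q hq]
      | smul a u _ hu =>
        intro q hq
        rw [hRsmul a u, inner_smul_left]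
        simp [Complex.mul_im, hu q hq]
    have hspS : ∀ p ∈ sp, S p ∈ sp := by
      intro p hp
      induction hp using Submodule.span_induction with
      | mem y hy =>
        obtain ⟨n, rfl⟩ := hy
        apply Submodule.subset_span
        exact ⟨n + 1, by show (S ^ (n+1)) x = S ((S ^ n) x); rw [pow_succ']; rfl⟩
      | zero => simp
      | add u w _ _ hu hw => rw [map_add]; exact Submodule.add_mem _ hu hw
      | smul a u _ hu =>
        rw [ContinuousLinearMap.map_smul_of_tower]
        exact Submodule.smul_mem _ _ hu
    constructor
    · intro v hv w hw
      obtain ⟨v₁, hv₁, p₁, hp₁, rfl⟩ := Submodule.mem_sup.mp hv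
      obtain ⟨w₁, hw₁, q₁, hq₁, rfl⟩ := Submodule.mem_sup.mp hw
      rw [inner_add_left, inner_add_right, inner_add_right]
      have e1 : (inner ℂ v₁ q₁ : ℂ) = 0 := horth v₁ hv₁ q₁ hq₁
      have e2 : (inner ℂ p₁ w₁ : ℂ) = 0 := by
        rw [← inner_conj_symm, horth w₁ hw₁ p₁ hp₁, map_zero]
      rw [e1, e2]
      simp [Complex.add_im, hVreal v₁ hv₁ w₁ hw₁, hrealsp p₁ hp₁ q₁ hq₁]
    · intro v hv
      obtain ⟨v₁, hv₁, p₁, hp₁, rfl⟩ := Submodule.mem_sup.mp hv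
      rw [map_add]
      exact Submodule.add_mem _ (Submodule.mem_sup_left (hVS v₁ hv₁))
        (Submodule.mem_sup_right (hspS p₁ hp₁))
  -- Zorn's lemma
  have hbot : (⊥ : Submodule ℝ 𝔥) ∈ 𝒮 := by
    constructor
    · intro v hv w hw
      rw [Submodule.mem_bot] at hv; subst hv; simp
    · intro v hv; rw [Submodule.mem_bot] at hv ⊢; simp [hv]
  have hVinit : ((⊥ : Submodule ℝ 𝔥) ⊔ Submodule.span ℝ (Set.range fun n : ℕ => (S ^ n) ξ)) ∈ 𝒮 :=
    span_good ⊥ hbot ξ (by intro v hv; rw [Submodule.mem_bot] at hv; subst hv; simp)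
  have hub : ∀ c ⊆ 𝒮, IsChain (· ≤ ·) c → ∀ y ∈ c, ∃ ub ∈ 𝒮, ∀ z ∈ c, z ≤ ub := by
    intro c hc hchain y hy
    refine ⟨sSup c, ?_, fun z hz => le_sSup hz⟩
    have hdir : DirectedOn (· ≤ ·) c := hchain.directedOn
    have hmem : ∀ {z : 𝔥}, z ∈ sSup c → ∃ W ∈ c, z ∈ W := fun hz =>
      (Submodule.mem_sSup_of_directed ⟨y, hy⟩ hdir).mp hz
    constructor
    · intro v hv w hw
      obtain ⟨W₁, hW₁, hv1⟩ := hmem hv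
      obtain ⟨W₂, hW₂, hw2⟩ := hmem hw
      obtain ⟨W₃, hW₃, h13, h23⟩ := hdir W₁ hW₁ W₂ hW₂
      exact (hc hW₃).1 v (h13 hv1) w (h23 hw2)
    · intro v hv
      obtain ⟨W₁, hW₁, hv1⟩ := hmem hv
      exact (le_sSup hW₁ : W₁ ≤ sSup c) ((hc hW₁).2 v hv1)
  obtain ⟨V₀, hleV₀, hV₀max⟩ := zorn_le_nonempty₀ 𝒮 hub _ hVinit
  obtain ⟨hreal, hSinv⟩ := hV₀max.1
  have hξ : ξ ∈ V₀ :=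
    hleV₀ (Submodule.mem_sup_right (Submodule.subset_span ⟨0, by simp⟩))
  -- V₀ is closed
  have hcoe : (V₀.topologicalClosure : Set 𝔥) = closure (V₀ : Set 𝔥) := rfl
  have hclosure : V₀.topologicalClosure ∈ 𝒮 := by
    have step1 : ∀ w ∈ V₀, ∀ v ∈ V₀.topologicalClosure, (inner ℂ v w : ℂ).im = 0 := by
      intro w hw v hv
      have hsub : (V₀ : Set 𝔥) ⊆ {u : 𝔥 | (inner ℂ u w : ℂ).im = 0} := fun u hu => hreal u hu w hw
      have hcl : IsClosed {u : 𝔥 | (inner ℂ u w : ℂ).im = 0} :=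
        isClosed_eq (Complex.continuous_im.comp (continuous_id.inner continuous_const))
          continuous_const
      exact closure_minimal hsub hcl (by rw [← hcoe]; exact hv)
    constructor
    · intro v hv w hw
      have hsub : (V₀ : Set 𝔥) ⊆ {u : 𝔥 | (inner ℂ v u : ℂ).im = 0} := fun u hu => step1 u hu v hv
      have hcl : IsClosed {u : 𝔥 | (inner ℂ v u : ℂ).im = 0} :=
        isClosed_eq (Complex.continuous_im.comp (continuous_const.inner continuous_id))
          continuous_const
      exact closure_minimal hsub hcl (by rw [← hcoe]; exact hw)
    · intro v hv
      have hv' : v ∈ closure (V₀ : Set 𝔥) := by rw [← hcoe]; exact hv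
      have h1 : S v ∈ S '' closure (V₀ : Set 𝔥) := ⟨v, hv', rfl⟩
      have h2 : S '' closure (V₀ : Set 𝔥) ⊆ closure (S '' (V₀ : Set 𝔥)) :=
        image_closure_subset_closure_image S.continuous
      have h3 : closure (S '' (V₀ : Set 𝔥)) ⊆ closure (V₀ : Set 𝔥) := by
        apply closure_mono
        rintro _ ⟨u, hu, rfl⟩
        exact hSinv u hu
      show S v ∈ (V₀.topologicalClosure : Set 𝔥)
      rw [hcoe]
      exact h3 (h2 h1)
  have hV₀closed : IsClosed (V₀ : Set 𝔥) := by
    have heq : V₀.topologicalClosure = V₀ :=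
      le_antisymm (hV₀max.2 hclosure V₀.le_topologicalClosure) V₀.le_topologicalClosure
    rw [← heq]
    exact V₀.isClosed_topologicalClosure
  refine ⟨V₀, hreal, hSinv, hξ, hV₀closed, ?_⟩
  intro x hx
  by_contra hxne
  have hW : (V₀ ⊔ Submodule.span ℝ (Set.range fun n : ℕ => (S ^ n) x)) ∈ 𝒮 :=
    span_good V₀ ⟨hreal, hSinv⟩ x hx
  have hxW : x ∈ V₀ ⊔ Submodule.span ℝ (Set.range fun n : ℕ => (S ^ n) x) :=
    Submodule.mem_sup_right (Submodule.subset_span ⟨0, by simp⟩)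
  have hle : V₀ ⊔ Submodule.span ℝ (Set.range fun n : ℕ => (S ^ n) x) ≤ V₀ :=
    hV₀max.2 hW le_sup_left
  exact hxne (inner_self_eq_zero.mp (hx x (hle hxW)))

/-- for a self-adjoint operator `S` on a complex Hilbert space `𝔥` and a
vector `ξ ∈ 𝔥`, there exists a complex conjugation `C` on `𝔥` (an anti-unitary
involution) with `Cξ = ξ` and `CS = SC`. -/
theorem stmt_18 {𝔥 : Type*} [NormedAddCommGroup 𝔥] [InnerProductSpace ℂ 𝔥]
    [CompleteSpace 𝔥] (S : 𝔥 →L[ℂ] 𝔥) (hS : IsSelfAdjoint S) (ξ : 𝔥) :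
    ∃ C : 𝔥 → 𝔥,
      (∀ x y : 𝔥, C (x + y) = C x + C y)
        ∧ (∀ (c : ℂ) (x : 𝔥), C (c • x) = (starRingEnd ℂ c) • C x)
        ∧ (∀ x y : 𝔥, (inner ℂ (C x) (C y) : ℂ) = inner ℂ y x)
        ∧ (∀ x : 𝔥, C (C x) = x)
        ∧ C ξ = ξ
        ∧ (∀ x : 𝔥, C (S x) = S (C x)) := by
  letI : InnerProductSpace ℝ 𝔥 := InnerProductSpace.complexToReal
  have hsymm : ∀ x y : 𝔥, (inner ℂ (S x) y : ℂ) = inner ℂ x (S y) :=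
    fun x y => (ContinuousLinearMap.isSelfAdjoint_iff_isSymmetric.mp hS) x y
  obtain ⟨V₀, hreal, hSinv, hξ, hclosed, hnond⟩ := stmt18_aux_max S hsymm ξ
  have hrinner : ∀ x y : 𝔥, (inner ℝ x y : ℝ) = (inner ℂ x y : ℂ).re := fun x y => rfl
  have hRsmul : ∀ (a : ℝ) (y : 𝔥), a • y = (a : ℂ) • y := fun a y => by
    rw [show ((a : ℂ)) = algebraMap ℝ ℂ a from rfl, algebraMap_smul]
  -- the multiplication-by-I map, as an ℝ-linear map
  set Jmap : 𝔥 →ₗ[ℝ] 𝔥 :=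
    { toFun := fun v => Complex.I • v
      map_add' := fun u v => smul_add _ _ _
      map_smul' := fun r v => by rw [RingHom.id_apply]; exact smul_comm Complex.I r v } with hJmap
  set L : Submodule ℝ 𝔥 := V₀.map Jmap with hLdef
  have hLmem : ∀ y : 𝔥, y ∈ L ↔ ∃ v ∈ V₀, Complex.I • v = y := by
    intro y
    rw [hLdef, Submodule.mem_map]
    exact Iff.rfl
  -- L is contained in the real orthogonal complement of V₀
  have hLK : L ≤ V₀ᗮ := by
    intro y hy
    obtain ⟨v, hv, rfl⟩ := (hLmem y).mp hy
    rw [Submodule.mem_orthogonal]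
    intro u hu
    rw [hrinner, inner_smul_right]
    simp [Complex.mul_re, hreal u hu v hv]
  -- L is closed
  have hLclosed : IsClosed (L : Set 𝔥) := by
    have himg : (L : Set 𝔥) = (fun x : 𝔥 => Complex.I • x) '' (V₀ : Set 𝔥) := by
      ext z
      rw [hLdef, Submodule.map_coe]
      exact Iff.rfl
    rw [himg]
    exact (Homeomorph.smulOfNeZero (Complex.I) Complex.I_ne_zero).isClosedMap _ hclosed
  haveI : CompleteSpace V₀ := hclosed.completeSpace_coe
  haveI : CompleteSpace L := hLclosed.completeSpace_coe
  -- the orthogonal complement of V₀ ⊔ L is trivial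
  have hUbot : (V₀ ⊔ L)ᗮ = ⊥ := by
    rw [Submodule.eq_bot_iff]
    intro x hx
    rw [Submodule.mem_orthogonal] at hx
    apply hnond
    intro v hv
    have h1 : (inner ℝ v x : ℝ) = 0 := hx v (Submodule.mem_sup_left hv)
    have h2 : (inner ℝ (Complex.I • v) x : ℝ) = 0 :=
      hx _ (Submodule.mem_sup_right ((hLmem _).mpr ⟨v, hv, rfl⟩))
    rw [hrinner] at h1 h2
    rw [inner_smul_left] at h2
    simp only [Complex.conj_I, neg_mul, Complex.neg_re, Complex.mul_re, Complex.I_re,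
      Complex.I_im, zero_mul, one_mul, zero_sub, neg_neg] at h2
    exact Complex.ext h1 h2
  -- the real orthogonal complement of V₀ is exactly L
  have hKperp : V₀ᗮ = L := by
    refine le_antisymm ?_ hLK
    intro z hz
    have hw : z - (L.orthogonalProjectionOnto z : 𝔥) ∈ Lᗮ :=
      Submodule.sub_starProjection_mem_orthogonal (K := L) z
    have hzK : z - (L.orthogonalProjectionOnto z : 𝔥) ∈ V₀ᗮ :=
      Submodule.sub_mem _ hz (hLK (L.orthogonalProjectionOnto z).2)
    have hmem : z - (L.orthogonalProjectionOnto z : 𝔥) ∈ V₀ᗮ ⊓ Lᗮ := ⟨hzK, hw⟩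
    rw [Submodule.inf_orthogonal, hUbot, Submodule.mem_bot, sub_eq_zero] at hmem
    rw [hmem]
    exact (L.orthogonalProjectionOnto z).2
  -- notation for the projection
  set P : 𝔥 →L[ℝ] V₀ := V₀.orthogonalProjectionOnto with hP
  have hPchar : ∀ z w : 𝔥, w ∈ V₀ → z - w ∈ V₀ᗮ → ((P z : 𝔥)) = w :=
    fun z w h1 h2 => Submodule.eq_starProjection_of_mem_orthogonal (K := V₀) h1 h2
  have hPmem : ∀ z : 𝔥, (P z : 𝔥) ∈ V₀ := fun z => (P z).2
  have hPperp : ∀ z : 𝔥, z - (P z : 𝔥) ∈ V₀ᗮ := fun z =>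
    Submodule.sub_starProjection_mem_orthogonal (K := V₀) z
  have hdec : ∀ z : 𝔥, ∃ b ∈ V₀, z - (P z : 𝔥) = Complex.I • b := by
    intro z
    have := hPperp z
    rw [hKperp] at this
    obtain ⟨b, hb, hbz⟩ := (hLmem _).mp this
    exact ⟨b, hb, hbz.symm⟩
  have hPadd : ∀ x y : 𝔥, (P (x + y) : 𝔥) = (P x : 𝔥) + (P y : 𝔥) := by
    intro x y; rw [map_add]; rfl
  have hPsmulR : ∀ (r : ℝ) (z : 𝔥), (P (r • z) : 𝔥) = r • (P z : 𝔥) := by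
    intro r z; rw [map_smul]; rfl
  have hPI : ∀ z : 𝔥, (P (Complex.I • z) : 𝔥) = Complex.I • z - Complex.I • (P z : 𝔥) := by
    intro z
    obtain ⟨b, hb, hzb⟩ := hdec z
    apply hPchar
    · rw [← smul_sub, hzb, smul_smul, Complex.I_mul_I, neg_one_smul]
      exact V₀.neg_mem hb
    · rw [sub_sub_cancel, hKperp]
      exact (hLmem _).mpr ⟨(P z : 𝔥), hPmem z, rfl⟩
  have hPS : ∀ z : 𝔥, (P (S z) : 𝔥) = S (P z : 𝔥) := by
    intro z
    obtain ⟨b, hb, hzb⟩ := hdec z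
    apply hPchar
    · exact hSinv _ (hPmem z)
    · rw [← map_sub, hzb, ContinuousLinearMap.map_smul, hKperp]
      exact (hLmem _).mpr ⟨S b, hSinv b hb, rfl⟩
  -- the conjugation
  refine ⟨fun z => (P z : 𝔥) - (z - (P z : 𝔥)), ?_, ?_, ?_, ?_, ?_, ?_⟩
  · intro x y
    simp only [hPadd]
    abel
  · -- conjugate-linearity
    have hCadd : ∀ x y : 𝔥, ((P (x + y) : 𝔥) - (x + y - (P (x + y) : 𝔥)))
        = ((P x : 𝔥) - (x - (P x : 𝔥))) + ((P y : 𝔥) - (y - (P y : 𝔥))) := by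
      intro x y; simp only [hPadd]; abel
    have hCR : ∀ (r : ℝ) (x : 𝔥), ((P (r • x) : 𝔥) - (r • x - (P (r • x) : 𝔥)))
        = r • ((P x : 𝔥) - (x - (P x : 𝔥))) := by
      intro r x; simp only [hPsmulR, smul_sub]
    have hCI : ∀ x : 𝔥, ((P (Complex.I • x) : 𝔥) - (Complex.I • x - (P (Complex.I • x) : 𝔥)))
        = -(Complex.I • ((P x : 𝔥) - (x - (P x : 𝔥)))) := by
      intro x; simp only [hPI]; module
    intro c x
    show ((P (c • x) : 𝔥) - (c • x - (P (c • x) : 𝔥)))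
      = (starRingEnd ℂ) c • ((P x : 𝔥) - (x - (P x : 𝔥)))
    have hcx : c • x = (c.re : ℝ) • x + (c.im : ℝ) • (Complex.I • x) := by
      rw [hRsmul, hRsmul, smul_smul, ← add_smul]
      norm_num [Complex.ext_iff]
    rw [hcx, hCadd, hCR, hCR, hCI, smul_neg, ← sub_eq_add_neg, hRsmul, hRsmul,
      smul_smul, ← sub_smul]
    congr 1
    simp [Complex.ext_iff]
  · -- anti-isometry
    intro x y
    obtain ⟨b, hb, hxb⟩ := hdec x
    obtain ⟨d, hd, hyd⟩ := hdec y
    have hsy : ∀ u ∈ V₀, ∀ v ∈ V₀, (inner ℂ u v : ℂ) = inner ℂ v u := by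
      intro u hu v hv
      rw [← inner_conj_symm]
      exact Complex.conj_eq_iff_im.mpr (hreal v hv u hu)
    have hx' : x = (P x : 𝔥) + Complex.I • b := by rw [← hxb]; abel
    have hy' : y = (P y : 𝔥) + Complex.I • d := by rw [← hyd]; abel
    show (inner ℂ ((P x : 𝔥) - (x - (P x : 𝔥))) ((P y : 𝔥) - (y - (P y : 𝔥))) : ℂ) = inner ℂ y x
    rw [hxb, hyd]
    conv_rhs => rw [hx', hy']
    simp only [inner_sub_left, inner_sub_right, inner_add_left, inner_add_right,
      inner_smul_left, inner_smul_right, Complex.conj_I, neg_mul, mul_neg, neg_neg,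
      ← mul_assoc, Complex.I_mul_I]
    rw [hsy _ (hPmem x) _ (hPmem y), hsy _ hb _ hd, hsy _ hb _ (hPmem y),
      hsy _ (hPmem x) _ hd]
    ring
  · -- involution
    intro x
    have hPC : (P ((P x : 𝔥) - (x - (P x : 𝔥))) : 𝔥) = (P x : 𝔥) := by
      apply hPchar _ _ (hPmem x)
      have : ((P x : 𝔥) - (x - (P x : 𝔥))) - (P x : 𝔥) = -(x - (P x : 𝔥)) := by abel
      rw [this]
      exact Submodule.neg_mem _ (hPperp x)
    show ((P ((P x : 𝔥) - (x - (P x : 𝔥))) : 𝔥)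
      - (((P x : 𝔥) - (x - (P x : 𝔥))) - (P ((P x : 𝔥) - (x - (P x : 𝔥))) : 𝔥))) = x
    rw [hPC]
    abel
  · -- fixes ξ
    have hPξ : (P ξ : 𝔥) = ξ := hPchar ξ ξ hξ (by simp)
    show (P ξ : 𝔥) - (ξ - (P ξ : 𝔥)) = ξ
    rw [hPξ]; abel
  · -- commutes with S
    intro x
    show (P (S x) : 𝔥) - (S x - (P (S x) : 𝔥))
      = S ((P x : 𝔥) - (x - (P x : 𝔥)))
    rw [hPS, map_sub, map_sub]
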